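/- Let E ⊆ ⋃_q 2^q × 2^q be a test, and T the tree generated by E: T := {(s,t) : s = t = ∅, or ∃q ∃w ∈ 2^{<ω} (s,t) = (s_q0w, t_q1w)} where E = {(s_q,t_q) : q ∈ ω}. Then for every p ∈ ω, the bipartite graph G_{𝒯_p} associated with 𝒯_p := T ∩ (2^p × 2^p) is acyclic. -/

import Mathlib

def tri (m : ℕ) : ℕ := ∑ k ∈ Finset.range (m + 1), k
noncomputable def Mfn (q : ℕ) : ℕ := Nat.findGreatest (fun m => tri m ≤ q) q
/-- The first component `(q)₀` of the inverse of the pairing `⟨n,p⟩ = tri (n+p) + p`. -/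
noncomputable def fst0 (q : ℕ) : ℕ := Mfn q + tri (Mfn q) - q

/-- A test: `e q = (s_q, t_q)` enumerates `E`, with the conditions (a), (b), (c). -/
noncomputable def IsTest (e : ℕ → List Bool × List Bool) : Prop :=
  -- (a): `(s_q, t_q)` is the unique element of `E` on level `q`
  (∀ q, (e q).1.length = q ∧ (e q).2.length = q) ∧
  (∀ q q', (e q').1.length = (e q).1.length → e q' = e q) ∧
  -- (b)
  (∀ m p : ℕ, ∀ u : List Bool, ∃ v : List Bool, ∃ q : ℕ,
    e q = ((e p).1 ++ false :: (u ++ v), (e p).2 ++ true :: (u ++ v)) ∧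
    fst0 (((e p).2 ++ true :: (u ++ v)).length - 1) = m) ∧
  -- (c)
  (∀ n > 0, ∃ q < n, ∃ w : List Bool,
    (e n).1 = (e q).1 ++ false :: w ∧ (e n).2 = (e q).2 ++ true :: w)

/-- The tree generated by a test. -/
def treeOf (e : ℕ → List Bool × List Bool) : Set (List Bool × List Bool) :=
  {x | (x.1 = [] ∧ x.2 = []) ∨ ∃ q w,
    x.1 = (e q).1 ++ false :: w ∧ x.2 = (e q).2 ++ true :: w}

def bipGraph {F₀ F₁ : Type*} (𝒯 : Set (F₀ × F₁)) : SimpleGraph (F₀ ⊕ F₁) :=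
  SimpleGraph.fromRel (fun x y => ∃ a b, x = Sum.inl a ∧ y = Sum.inr b ∧ (a, b) ∈ 𝒯)

private lemma drop_pref (pre w : List Bool) (x : Bool) {n : ℕ} (h : pre.length = n) :
    (pre ++ x :: w).drop n = x :: w := by
  subst h; exact List.drop_left

private lemma drop_pref' (pre w : List Bool) (x : Bool) {n k : ℕ} (h : pre.length = n) :
    (pre ++ x :: w).drop (n + (k + 1)) = w.drop k := by
  subst h
  rw [← List.drop_drop, List.drop_left, List.drop_succ_cons]

private lemma walk_dartSum {V : Type*} {G : SimpleGraph V} (φ : V → ZMod 2) {u v : V}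
    (W : G.Walk u v) :
    (W.darts.map (fun d => φ d.toProd.2 - φ d.toProd.1)).sum = φ v - φ u := by
  induction W with
  | nil => simp
  | cons h W ih =>
    rw [SimpleGraph.Walk.darts_cons, List.map_cons, List.sum_cons, ih]
    ring

private lemma walk_const {V α : Type*} {G : SimpleGraph V} (φ : V → α) {u v : V}
    (W : G.Walk u v) (h : ∀ d ∈ W.darts, φ d.toProd.1 = φ d.toProd.2) :
    ∀ x ∈ W.support, φ x = φ u := by
  induction W with
  | nil =>
    intro x hx
    rw [SimpleGraph.Walk.support_nil, List.mem_singleton] at hx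
    rw [hx]
  | @cons a b c hadj W ih =>
    intro x hx
    rw [SimpleGraph.Walk.support_cons, List.mem_cons] at hx
    have hab : φ a = φ b := h _ (by rw [SimpleGraph.Walk.darts_cons]; exact List.mem_cons_self)
    rcases hx with rfl | hx
    · rfl
    · rw [ih (fun d hd => h d (by rw [SimpleGraph.Walk.darts_cons]; exact List.mem_cons_of_mem _ hd)) x hx, hab]

private lemma sum_single {α : Type*} [DecidableEq α] (a : α) (f : α → ZMod 2) :
    ∀ (l : List α), l.Nodup → a ∈ l → (∀ x ∈ l, f x = if x = a then 1 else 0) →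
    (l.map f).sum = 1 := by
  intro l
  induction l with
  | nil => intro _ ha _; exact absurd ha List.not_mem_nil
  | cons b l ih =>
    intro hnd hmem hf
    rw [List.nodup_cons] at hnd
    rw [List.map_cons, List.sum_cons]
    by_cases hba : b = a
    · subst hba
      rw [hf b (List.mem_cons_self), if_pos rfl]
      have : (l.map f).sum = 0 := by
        apply List.sum_eq_zero
        intro x hx
        obtain ⟨y, hy, rfl⟩ := List.mem_map.mp hx
        rw [hf y (List.mem_cons_of_mem _ hy), if_neg]
        rintro rfl
        exact hnd.1 hy
      rw [this, add_zero]
    · have ha : a ∈ l := by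
        rcases List.mem_cons.mp hmem with rfl | h
        · exact absurd rfl hba
        · exact h
      rw [hf b (List.mem_cons_self), if_neg hba,
        ih hnd.2 ha (fun x hx => hf x (List.mem_cons_of_mem _ hx)), zero_add]

private lemma short_of_allEq {α : Type*} (a : α) :
    ∀ (l : List α), l.Nodup → (∀ x ∈ l, x = a) → l.length ≤ 1 := by
  intro l
  induction l with
  | nil => intro _ _; simp
  | cons b l ih =>
    intro hnd hall
    rw [List.nodup_cons] at hnd
    cases l with
    | nil => simp
    | cons c l =>
      exfalso
      have hb : b = a := hall b (List.mem_cons_self)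
      have hcc : c = a := hall c (List.mem_cons_of_mem _ (List.mem_cons_self))
      exact hnd.1 (by rw [hb, hcc]; exact List.mem_cons_self)

theorem test_tree_has_acyclic_levels (e : ℕ → List Bool × List Bool)
    (he : IsTest e) (p : ℕ) :
    (bipGraph {x | x ∈ treeOf e ∧ x.1.length = p ∧ x.2.length = p}).IsAcyclic := by
  classical
  intro v c hc
  let 𝒯 : Set (List Bool × List Bool) :=
    {x | x ∈ treeOf e ∧ x.1.length = p ∧ x.2.length = p}
  -- basic facts about the cycle
  have hlen3 : 3 ≤ c.length := hc.three_le_length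
  have hedges_nodup : c.edges.Nodup := hc.edges_nodup
  have hedges_eq : c.edges = c.darts.map SimpleGraph.Dart.edge := rfl
  have hdarts_nodup : c.darts.Nodup := by
    rw [hedges_eq] at hedges_nodup
    exact hedges_nodup.of_map _
  -- each dart comes from a pair in 𝒯
  have hadj : ∀ d : (bipGraph 𝒯).Dart, ∃ a b,
      ((d.toProd.1 = Sum.inl a ∧ d.toProd.2 = Sum.inr b) ∨
       (d.toProd.1 = Sum.inr b ∧ d.toProd.2 = Sum.inl a)) ∧ (a, b) ∈ 𝒯 := by
    intro d
    have hd := d.adj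
    simp only [bipGraph, SimpleGraph.fromRel_adj] at hd
    rcases hd.2 with ⟨a, b, h1, h2, h3⟩ | ⟨a, b, h1, h2, h3⟩
    · exact ⟨a, b, Or.inl ⟨h1, h2⟩, h3⟩
    · exact ⟨a, b, Or.inr ⟨h2, h1⟩, h3⟩
  rcases Nat.eq_zero_or_pos p with hp | hp
  · -- p = 0 : at most one possible edge
    have hall : ∀ E ∈ c.edges, E = s(Sum.inl ([] : List Bool), Sum.inr ([] : List Bool)) := by
      intro E hE
      rw [hedges_eq] at hE
      obtain ⟨d, hd, rfl⟩ := List.mem_map.mp hE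
      obtain ⟨a, b, hor, hmem⟩ := hadj d
      obtain ⟨-, hla, hlb⟩ := hmem
      have ha : a = [] := List.length_eq_zero_iff.mp (by rw [hla, hp])
      have hb : b = [] := List.length_eq_zero_iff.mp (by rw [hlb, hp])
      subst ha; subst hb
      have : d.edge = s(d.toProd.1, d.toProd.2) := rfl
      rcases hor with ⟨h1, h2⟩ | ⟨h1, h2⟩
      · rw [this, h1, h2]
      · rw [this, h1, h2, Sym2.eq_swap]
    have := short_of_allEq _ c.edges hedges_nodup hall
    rw [SimpleGraph.Walk.length_edges] at this
    omega
  -- p > 0 : every dart decomposes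
  have key : ∀ d : (bipGraph 𝒯).Dart, ∃ q w,
      (d.toProd.1 = Sum.inl ((e q).1 ++ false :: w) ∧
        d.toProd.2 = Sum.inr ((e q).2 ++ true :: w)) ∨
      (d.toProd.1 = Sum.inr ((e q).2 ++ true :: w) ∧
        d.toProd.2 = Sum.inl ((e q).1 ++ false :: w)) := by
    intro d
    obtain ⟨a, b, hor, hmem⟩ := hadj d
    obtain ⟨htree, hla, hlb⟩ := hmem
    rcases htree with ⟨ha, hb⟩ | ⟨q, w, ha, hb⟩
    · exfalso; rw [ha] at hla; simp at hla; omega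
    · subst ha; subst hb; exact ⟨q, w, hor⟩
  choose fq fw hP using key
  -- the maximal label Q
  have hdarts_ne : c.darts ≠ [] := by
    intro h
    have := c.length_darts
    rw [h] at this
    simp at this
    omega
  have hSne : ((c.darts.map fq).toFinset).Nonempty := by
    rw [Finset.nonempty_iff_ne_empty]
    intro h
    rw [List.toFinset_eq_empty_iff, List.map_eq_nil_iff] at h
    exact hdarts_ne h
  set Q := ((c.darts.map fq).toFinset).max' hSne with hQdef
  have hmax : ∀ d ∈ c.darts, fq d ≤ Q := fun d hd =>
    Finset.le_max' _ _ (List.mem_toFinset.mpr (List.mem_map_of_mem (f := fq) hd))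
  obtain ⟨d₀, hd₀, hfq₀⟩ : ∃ d ∈ c.darts, fq d = Q := by
    have := ((c.darts.map fq).toFinset).max'_mem hSne
    rw [← hQdef, List.mem_toFinset] at this
    exact List.mem_map.mp this
  -- the key functions
  set τ : List Bool ⊕ List Bool → List Bool := fun x => (Sum.elim id id x).drop Q with hτdef
  -- the structure of darts relative to Q
  have hcomp : ∀ d ∈ c.darts,
      (fq d = Q ∧ ((τ d.toProd.1 = false :: fw d ∧ τ d.toProd.2 = true :: fw d) ∨
                   (τ d.toProd.1 = true :: fw d ∧ τ d.toProd.2 = false :: fw d))) ∨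
      (fq d ≠ Q ∧ τ d.toProd.1 = τ d.toProd.2) := by
    intro d hd
    have hor := hP d
    have hl1 : ((e (fq d)).1).length = fq d := (he.1 (fq d)).1
    have hl2 : ((e (fq d)).2).length = fq d := (he.1 (fq d)).2
    have hq : fq d ≤ Q := hmax d hd
    rcases eq_or_lt_of_le hq with heq | hlt
    · left
      refine ⟨heq, ?_⟩
      have hA : ((e (fq d)).1 ++ false :: fw d).drop Q = false :: fw d := by
        rw [← heq]; exact drop_pref _ _ _ hl1
      have hB : ((e (fq d)).2 ++ true :: fw d).drop Q = true :: fw d := by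
        rw [← heq]; exact drop_pref _ _ _ hl2
      rcases hor with ⟨h1, h2⟩ | ⟨h1, h2⟩
      · left; constructor
        · rw [hτdef]; simp only [h1, Sum.elim_inl, id]; exact hA
        · rw [hτdef]; simp only [h2, Sum.elim_inr, id]; exact hB
      · right; constructor
        · rw [hτdef]; simp only [h1, Sum.elim_inr, id]; exact hB
        · rw [hτdef]; simp only [h2, Sum.elim_inl, id]; exact hA
    · right
      refine ⟨Nat.ne_of_lt hlt, ?_⟩
      obtain ⟨k, hk⟩ : ∃ k, Q = fq d + (k + 1) := ⟨Q - fq d - 1, by omega⟩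
      have hA : ((e (fq d)).1 ++ false :: fw d).drop Q = (fw d).drop k := by
        rw [hk]; exact drop_pref' _ _ _ hl1
      have hB : ((e (fq d)).2 ++ true :: fw d).drop Q = (fw d).drop k := by
        rw [hk]; exact drop_pref' _ _ _ hl2
      rcases hor with ⟨h1, h2⟩ | ⟨h1, h2⟩
      · rw [hτdef]
        simp only [h1, h2, Sum.elim_inl, Sum.elim_inr, id]
        rw [hA, hB]
      · rw [hτdef]
        simp only [h1, h2, Sum.elim_inl, Sum.elim_inr, id]
        rw [hA, hB]
  -- θ = tail of τ is constant on the cycle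
  set θ : List Bool ⊕ List Bool → List Bool := fun x => (τ x).tail with hθdef
  have hθconst : ∀ x ∈ c.support, θ x = θ v := by
    apply walk_const
    intro d hd
    rcases hcomp d hd with ⟨_, ⟨h1, h2⟩ | ⟨h1, h2⟩⟩ | ⟨_, h12⟩
    · simp only [hθdef, h1, h2, List.tail_cons]
    · simp only [hθdef, h1, h2, List.tail_cons]
    · simp only [hθdef, h12]
  set w₀ := fw d₀ with hw₀
  have hθv : θ v = w₀ := by
    have hmemsup := SimpleGraph.Walk.dart_fst_mem_support_of_mem_darts c hd₀
    have := hθconst d₀.toProd.1 hmemsup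
    rcases hcomp d₀ hd₀ with ⟨_, ⟨h1, _⟩ | ⟨h1, _⟩⟩ | ⟨hne, _⟩
    · rw [← this, hθdef]; simp only [h1, List.tail_cons]; exact hw₀.symm
    · rw [← this, hθdef]; simp only [h1, List.tail_cons]; exact hw₀.symm
    · exact absurd hfq₀ hne
  -- any dart with label Q equals d₀
  have huniq : ∀ d ∈ c.darts, fq d = Q → d = d₀ := by
    intro d hd hQd
    have hwd : fw d = w₀ := by
      have hmemsup := SimpleGraph.Walk.dart_fst_mem_support_of_mem_darts c hd
      have hx := hθconst d.toProd.1 hmemsup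
      rw [hθv] at hx
      rcases hcomp d hd with ⟨_, ⟨h1, _⟩ | ⟨h1, _⟩⟩ | ⟨hne, _⟩
      · rw [← hx, hθdef]; simp only [h1, List.tail_cons]
      · rw [← hx, hθdef]; simp only [h1, List.tail_cons]
      · exact absurd hQd hne
    have hedge : d.edge = d₀.edge := by
      have hd' := hP d
      have hd₀' := hP d₀
      rw [hQd, hwd] at hd'
      rw [hfq₀, ← hw₀] at hd₀'
      have e1 : d.edge = s(d.toProd.1, d.toProd.2) := rfl
      have e2 : d₀.edge = s(d₀.toProd.1, d₀.toProd.2) := rfl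
      rcases hd' with ⟨h1, h2⟩ | ⟨h1, h2⟩ <;> rcases hd₀' with ⟨h3, h4⟩ | ⟨h3, h4⟩ <;>
        rw [e1, e2, h1, h2, h3, h4]
      · rw [Sym2.eq_swap]
      · rw [Sym2.eq_swap]
    have hinj := List.inj_on_of_nodup_map (f := SimpleGraph.Dart.edge) (l := c.darts)
      (by rw [← hedges_eq]; exact hedges_nodup)
    exact hinj hd hd₀ hedge
  -- β : the bit at position Q
  set β : List Bool ⊕ List Bool → ZMod 2 :=
    fun x => if (τ x).getD 0 false = true then 1 else 0 with hβdef
  have hterm : ∀ d ∈ c.darts,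
      β d.toProd.2 - β d.toProd.1 = if d = d₀ then 1 else 0 := by
    intro d hd
    by_cases hdd : d = d₀
    · subst hdd
      rw [if_pos rfl]
      rcases hcomp d hd with ⟨_, ⟨h1, h2⟩ | ⟨h1, h2⟩⟩ | ⟨hne, _⟩
      · rw [hβdef]; simp only [h1, h2, List.getD_cons_zero]
        norm_num
      · rw [hβdef]; simp only [h1, h2, List.getD_cons_zero]
        norm_num
        decide
      · exact absurd hfq₀ hne
    · rw [if_neg hdd]
      rcases hcomp d hd with ⟨hQd, _⟩ | ⟨_, h12⟩
      · exact absurd (huniq d hd hQd) hdd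
      · rw [hβdef]; simp only [h12, sub_self]
  have hsum0 : (c.darts.map (fun d => β d.toProd.2 - β d.toProd.1)).sum = 0 := by
    rw [walk_dartSum, sub_self]
  have hsum1 : (c.darts.map (fun d => β d.toProd.2 - β d.toProd.1)).sum = 1 :=
    sum_single d₀ _ c.darts hdarts_nodup hd₀ hterm
  rw [hsum0] at hsum1
  exact absurd hsum1 (by decide)
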